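/- For λ > 0, T > 0, R_c > 0, and 1 < α₀ < 2 < α₁, the quantity P(λ) := λ π R_c² ∫₀¹ exp(−λ π R_c² (1 − 2T/(2−α₀)) x) · exp(−λ π R_c² (2T(α₁−α₀)/((2−α₀)(α₁−2))) x^{α₀/2}) dx satisfies: if additionally T ≥ 1 − α₀/2, then P(λ) ≥ δ₀ (λπR_c²)^{1−δ₀} c^{−δ₀} γ(δ₀, λπR_c² c), where δ₀ = 2/α₀, c = 2T(α₁−α₀)/((2−α₀)(α₁−2)) and γ is the lower incomplete gamma function. Consequently λ·P(λ) = Ω(λ^{2−2/α₀}) as λ → ∞. -/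

import Mathlib

open Real MeasureTheory Filter

/-- Lower incomplete gamma function `γ(s, z) = ∫₀^z t^{s-1} e^{-t} dt`. -/
noncomputable def lowerGamma (s z : ℝ) : ℝ := ∫ t in (0:ℝ)..z, t ^ (s - 1) * Real.exp (-t)

/-- The lower-bound integral `P(λ)` for the SIR coverage probability. -/
noncomputable def Pint (T Rc α₀ α₁ lam : ℝ) : ℝ :=
  lam * π * Rc ^ 2 *
    ∫ x in (0:ℝ)..1,
      Real.exp (-(lam * π * Rc ^ 2 * (1 - 2 * T / (2 - α₀)) * x)) *
        Real.exp (-(lam * π * Rc ^ 2 *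
          (2 * T * (α₁ - α₀) / ((2 - α₀) * (α₁ - 2))) * x ^ (α₀ / 2)))

lemma cont_rpow_const (p : ℝ) (hp : 0 ≤ p) : Continuous (fun x : ℝ => x ^ p) := by
  rw [continuous_iff_continuousAt]
  intro x
  exact Real.continuousAt_rpow_const x p (Or.inr hp)

/-- Key change-of-variables identity. -/
lemma sub_lemma (z α₀ : ℝ) (hz : 0 < z) (h1 : 1 < α₀) (h2 : α₀ < 2) :
    ∫ x in (0:ℝ)..1, Real.exp (-(z * x ^ (α₀ / 2))) =
      (2 / α₀) * z ^ (-(2 / α₀)) * lowerGamma (2 / α₀) z := by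
  have hα0 : (0:ℝ) < α₀ := by linarith
  set δ := (2 / α₀ : ℝ) with hδ
  have hδ1 : 1 ≤ δ := by
    rw [hδ, le_div_iff₀ hα0]; linarith
  have hδpos : 0 < δ := by linarith
  have hd : ∀ u : ℝ, HasDerivAt (fun u => (u / z) ^ δ) (δ * (u / z) ^ (δ - 1) * (1 / z)) u := by
    intro u
    have h := (Real.hasDerivAt_rpow_const (x := u / z) (p := δ) (Or.inr hδ1)).comp u
      ((hasDerivAt_id u).div_const z)
    simpa [Function.comp_def, mul_comm, mul_assoc, mul_left_comm] using h
  have hcont' : ContinuousOn (fun u : ℝ => δ * (u / z) ^ (δ - 1) * (1 / z)) (Set.uIcc 0 z) := by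
    apply Continuous.continuousOn
    exact (continuous_const.mul ((cont_rpow_const (δ - 1) (by linarith)).comp
      (continuous_id.div_const z))).mul continuous_const
  have hg : Continuous (fun x : ℝ => Real.exp (-(z * x ^ (α₀ / 2)))) := by
    exact Real.continuous_exp.comp
      ((continuous_const.mul (cont_rpow_const (α₀ / 2) (by linarith))).neg)
  have key := intervalIntegral.integral_comp_smul_deriv (a := 0) (b := z)
    (f := fun u => (u / z) ^ δ) (f' := fun u => δ * (u / z) ^ (δ - 1) * (1 / z))
    (g := fun x => Real.exp (-(z * x ^ (α₀ / 2))))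
    (fun u _ => hd u) hcont' hg
  have hf0 : ((0:ℝ) / z) ^ δ = (0:ℝ) := by
    rw [zero_div, Real.zero_rpow (by linarith)]
  have hfz : (z / z) ^ δ = (1:ℝ) := by
    rw [div_self hz.ne', Real.one_rpow]
  simp only [hf0, hfz] at key
  rw [← key]
  -- now rewrite the left integrand on [0, z]
  have heq : Set.EqOn
      (fun u : ℝ => (δ * (u / z) ^ (δ - 1) * (1 / z)) •
        ((fun x => Real.exp (-(z * x ^ (α₀ / 2)))) ∘ fun u => (u / z) ^ δ) u)
      (fun u : ℝ => (δ * z ^ (-δ)) * (u ^ (δ - 1) * Real.exp (-u))) (Set.uIcc 0 z) := by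
    intro u hu
    have hu0 : 0 ≤ u := by
      rcases Set.mem_uIcc.mp hu with h | h
      · exact h.1
      · linarith [h.1, hz]
    have huz : 0 ≤ u / z := div_nonneg hu0 hz.le
    have hpow : ((u / z) ^ δ) ^ (α₀ / 2) = u / z := by
      rw [← Real.rpow_mul huz,
        show δ * (α₀ / 2) = 1 by rw [hδ]; field_simp, Real.rpow_one]
    have hz_mul : z * (u / z) = u := by field_simp
    simp only [Function.comp, smul_eq_mul]
    rw [hpow, hz_mul, Real.div_rpow hu0 hz.le]
    have hzδ : z ^ (δ - 1) * z = z ^ δ := by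
      nth_rewrite 2 [← Real.rpow_one z]
      rw [← Real.rpow_add hz]
      norm_num
    have : z ^ (-δ) = (z ^ (δ - 1) * z)⁻¹ := by
      rw [hzδ, ← Real.rpow_neg hz.le]
    rw [this]
    field_simp
  rw [intervalIntegral.integral_congr heq, intervalIntegral.integral_const_mul]
  rw [lowerGamma]

lemma lg_mono (s a b : ℝ) (hs : 1 ≤ s) (ha : 0 ≤ a) (hab : a ≤ b) :
    lowerGamma s a ≤ lowerGamma s b := by
  have hcont : Continuous (fun t : ℝ => t ^ (s - 1) * Real.exp (-t)) :=
    (cont_rpow_const (s - 1) (by linarith)).mul (Real.continuous_exp.comp continuous_neg)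
  have h1 : IntervalIntegrable (fun t : ℝ => t ^ (s - 1) * Real.exp (-t)) volume 0 a :=
    hcont.intervalIntegrable 0 a
  have h2 : IntervalIntegrable (fun t : ℝ => t ^ (s - 1) * Real.exp (-t)) volume a b :=
    hcont.intervalIntegrable a b
  have hadd := intervalIntegral.integral_add_adjacent_intervals h1 h2
  have hnn : 0 ≤ ∫ t in a..b, t ^ (s - 1) * Real.exp (-t) := by
    apply intervalIntegral.integral_nonneg hab
    intro u hu
    exact mul_nonneg (Real.rpow_nonneg (le_trans ha hu.1) _) (Real.exp_nonneg _)
  unfold lowerGamma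
  linarith [hadd]

lemma lg_pos (s : ℝ) (hs : 1 ≤ s) : 0 < lowerGamma s 1 := by
  apply intervalIntegral.intervalIntegral_pos_of_pos_on
  · exact ((cont_rpow_const (s - 1) (by linarith)).mul
      (Real.continuous_exp.comp continuous_neg)).intervalIntegrable 0 1
  · intro x hx
    exact mul_pos (Real.rpow_pos_of_pos hx.1 _) (Real.exp_pos _)
  · norm_num

theorem stmt_17 (T Rc α₀ α₁ : ℝ) (hT : 0 < T) (hRc : 0 < Rc)
    (hα₀1 : 1 < α₀) (hα₀2 : α₀ < 2) (hα₁ : 2 < α₁) :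
    (∀ lam : ℝ, 0 < lam → T ≥ 1 - α₀ / 2 →
      Pint T Rc α₀ α₁ lam ≥
        (2 / α₀) * (lam * π * Rc ^ 2) ^ (1 - 2 / α₀) *
          (2 * T * (α₁ - α₀) / ((2 - α₀) * (α₁ - 2))) ^ (-(2 / α₀)) *
          lowerGamma (2 / α₀)
            (lam * π * Rc ^ 2 * (2 * T * (α₁ - α₀) / ((2 - α₀) * (α₁ - 2))))) ∧
    (T ≥ 1 - α₀ / 2 →
      ∃ C > (0:ℝ), ∃ Λ : ℝ, ∀ lam ≥ Λ, 0 < lam →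
        lam * Pint T Rc α₀ α₁ lam ≥ C * lam ^ (2 - 2 / α₀)) := by
  have hα0 : (0:ℝ) < α₀ := by linarith
  set c : ℝ := 2 * T * (α₁ - α₀) / ((2 - α₀) * (α₁ - 2)) with hc
  have hcpos : 0 < c := by
    apply div_pos
    · have : 0 < α₁ - α₀ := by linarith
      positivity
    · have h1 : 0 < 2 - α₀ := by linarith
      have h2 : 0 < α₁ - 2 := by linarith
      positivity
  set δ : ℝ := 2 / α₀ with hδ
  have hδ1 : 1 < δ := by rw [hδ, lt_div_iff₀ hα0]; linarith
  have key : ∀ lam : ℝ, 0 < lam → T ≥ 1 - α₀ / 2 →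
      Pint T Rc α₀ α₁ lam ≥
        δ * (lam * π * Rc ^ 2) ^ (1 - δ) * c ^ (-δ) *
          lowerGamma δ (lam * π * Rc ^ 2 * c) := by
    intro lam hlam hT'
    set A : ℝ := lam * π * Rc ^ 2 with hA
    have hApos : 0 < A := by positivity
    have hk : 1 - 2 * T / (2 - α₀) ≤ 0 := by
      have h1 : (0:ℝ) < 2 - α₀ := by linarith
      rw [sub_nonpos, le_div_iff₀ h1]
      linarith
    -- step 1: integrand bound
    have hzpos : 0 < A * c := mul_pos hApos hcpos
    have hint : (∫ x in (0:ℝ)..1,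
        Real.exp (-(A * (1 - 2 * T / (2 - α₀)) * x)) * Real.exp (-(A * c * x ^ (α₀ / 2))))
        ≥ ∫ x in (0:ℝ)..1, Real.exp (-(A * c * x ^ (α₀ / 2))) := by
      apply intervalIntegral.integral_mono_on (by norm_num)
      · exact (Real.continuous_exp.comp
          ((continuous_const.mul (cont_rpow_const (α₀ / 2) (by linarith))).neg)).intervalIntegrable 0 1
      · apply Continuous.intervalIntegrable
        apply Continuous.mul
        · exact Real.continuous_exp.comp ((continuous_const.mul continuous_id).neg)
        · exact Real.continuous_exp.comp
            ((continuous_const.mul (cont_rpow_const (α₀ / 2) (by linarith))).neg)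
      · intro x hx
        have h1 : (1:ℝ) ≤ Real.exp (-(A * (1 - 2 * T / (2 - α₀)) * x)) := by
          apply Real.one_le_exp
          have : A * (1 - 2 * T / (2 - α₀)) * x ≤ 0 :=
            mul_nonpos_of_nonpos_of_nonneg (mul_nonpos_of_nonneg_of_nonpos hApos.le hk) hx.1
          linarith
        nth_rewrite 1 [← one_mul (Real.exp (-(A * c * x ^ (α₀ / 2))))]
        exact mul_le_mul_of_nonneg_right h1 (Real.exp_nonneg _)
    have hsub := sub_lemma (A * c) α₀ hzpos hα₀1 hα₀2
    have hPint : Pint T Rc α₀ α₁ lam = A * ∫ x in (0:ℝ)..1,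
        Real.exp (-(A * (1 - 2 * T / (2 - α₀)) * x)) * Real.exp (-(A * c * x ^ (α₀ / 2))) := rfl
    have step : Pint T Rc α₀ α₁ lam ≥ A * ((2 / α₀) * (A * c) ^ (-(2 / α₀)) *
        lowerGamma (2 / α₀) (A * c)) := by
      rw [hPint, ← hsub]
      exact mul_le_mul_of_nonneg_left hint hApos.le
    have halg : A * ((2 / α₀) * (A * c) ^ (-(2 / α₀)) * lowerGamma (2 / α₀) (A * c))
        = δ * A ^ (1 - δ) * c ^ (-δ) * lowerGamma δ (A * c) := by
      rw [← hδ, Real.mul_rpow hApos.le hcpos.le]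
      have : A * A ^ (-δ) = A ^ (1 - δ) := by
        rw [show (1 - δ) = 1 + (-δ) by ring, Real.rpow_add hApos, Real.rpow_one]
      rw [show A * (δ * (A ^ (-δ) * c ^ (-δ)) * lowerGamma δ (A * c))
          = δ * (A * A ^ (-δ)) * c ^ (-δ) * lowerGamma δ (A * c) by ring, this]
    rw [← halg]
    exact step
  constructor
  · exact key
  · intro hT'
    set B : ℝ := π * Rc ^ 2 with hB
    have hBpos : 0 < B := by positivity
    refine ⟨δ * B ^ (1 - δ) * c ^ (-δ) * lowerGamma δ 1, ?_, max 1 (1 / (B * c)), ?_⟩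
    · have := lg_pos δ hδ1.le
      have h1 : (0:ℝ) < B ^ (1 - δ) := Real.rpow_pos_of_pos hBpos _
      have h2 : (0:ℝ) < c ^ (-δ) := Real.rpow_pos_of_pos hcpos _
      positivity
    · intro lam hlam hlam0
      have hAeq : lam * π * Rc ^ 2 = lam * B := by rw [hB]; ring
      have h1 : 1 ≤ lam * B * c := by
        have h2 : 1 / (B * c) ≤ lam := le_trans (le_max_right _ _) hlam
        have hBC : 0 < B * c := mul_pos hBpos hcpos
        calc (1:ℝ) = (1 / (B * c)) * (B * c) := by field_simp
        _ ≤ lam * (B * c) := mul_le_mul_of_nonneg_right h2 hBC.le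
        _ = lam * B * c := by ring
      have hmono : lowerGamma δ 1 ≤ lowerGamma δ (lam * B * c) :=
        lg_mono δ 1 (lam * B * c) hδ1.le (by norm_num) h1
      have hk := key lam hlam0 hT'
      rw [hAeq] at hk
      have hf1 : (0:ℝ) < (lam * B) ^ (1 - δ) := Real.rpow_pos_of_pos (by positivity) _
      have hf2 : (0:ℝ) < c ^ (-δ) := Real.rpow_pos_of_pos hcpos _
      have step2 : lam * Pint T Rc α₀ α₁ lam ≥
          lam * (δ * (lam * B) ^ (1 - δ) * c ^ (-δ) * lowerGamma δ 1) := by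
        calc lam * Pint T Rc α₀ α₁ lam
            ≥ lam * (δ * (lam * B) ^ (1 - δ) * c ^ (-δ) * lowerGamma δ (lam * B * c)) :=
              mul_le_mul_of_nonneg_left hk hlam0.le
          _ ≥ lam * (δ * (lam * B) ^ (1 - δ) * c ^ (-δ) * lowerGamma δ 1) := by
              apply mul_le_mul_of_nonneg_left _ hlam0.le
              apply mul_le_mul_of_nonneg_left hmono
              positivity
      have halg2 : lam * (δ * (lam * B) ^ (1 - δ) * c ^ (-δ) * lowerGamma δ 1)
          = (δ * B ^ (1 - δ) * c ^ (-δ) * lowerGamma δ 1) * lam ^ (2 - δ) := by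
        rw [Real.mul_rpow hlam0.le hBpos.le]
        have : lam * lam ^ (1 - δ) = lam ^ (2 - δ) := by
          rw [show (2 - δ) = 1 + (1 - δ) by ring, Real.rpow_add hlam0, Real.rpow_one]
        rw [show lam * (δ * (lam ^ (1 - δ) * B ^ (1 - δ)) * c ^ (-δ) * lowerGamma δ 1)
            = δ * B ^ (1 - δ) * c ^ (-δ) * lowerGamma δ 1 * (lam * lam ^ (1 - δ)) by ring, this]
      linarith [step2, halg2.ge]
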